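/- Let $a, b$ be real numbers with $a + b > 0$ and $0 \le b < Q$. Define $v(x) = \int_{\{y : \rho(y) \le 1\}} \rho(x)^{-a}\,\rho(y^{-1}x)^{-Q+a+b}\,\rho(y)^{-b}\,dV(y)$ for $x$ in the Heisenberg group $H_n$. Then there exist constants $c_1, c_2 > 0$ and $R_0 \ge 1$ such that $c_1\,\rho(x)^{b-Q} \le v(x) \le c_2\,\rho(x)^{b-Q}$ for all $x$ with $\rho(x) \ge R_0$; that is, $v$ behaves like a constant multiple of $\rho^{-Q+b}$ at infinity. -/

import Mathlib

open MeasureTheory ENNReal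

noncomputable section

/-- The underlying space of the Heisenberg group `H_n = ℂⁿ × ℝ`. -/
abbrev H (n : ℕ) := (Fin n → ℂ) × ℝ

/-- Heisenberg group multiplication. -/
def Hmul {n : ℕ} (x y : H n) : H n :=
  (x.1 + y.1, x.2 + y.2 + 2 * (∑ j, x.1 j * (starRingEnd ℂ) (y.1 j)).im)

/-- Heisenberg group inverse. -/
def Hinv {n : ℕ} (x : H n) : H n := (-x.1, -x.2)

/-- The Korányi gauge `ρ(z,t) = (|z|⁴ + t²)^{1/4}`. -/
def Hrho {n : ℕ} (x : H n) : ℝ :=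
  ((∑ j, ‖x.1 j‖ ^ 2) ^ 2 + x.2 ^ 2) ^ ((1 : ℝ) / 4)

/-- `σ = (1 + ρ⁴)^{1/4}`. -/
def Hsigma {n : ℕ} (x : H n) : ℝ := (1 + Hrho x ^ 4) ^ ((1 : ℝ) / 4)

/-- Homogeneous dimension `Q = 2n+2`. -/
def hQ (n : ℕ) : ℝ := 2 * n + 2

/-- Weighted Lebesgue norm `‖u‖_{p,δ}` (with weight `σ`). -/
def wnorm {n : ℕ} (p : ℝ≥0∞) (δ : ℝ) (u : H n → ℝ) : ℝ≥0∞ :=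
  if p = ∞ then essSup (fun x => ENNReal.ofReal (Hsigma x ^ (-δ) * |u x|)) volume
  else (∫⁻ x : H n,
      ENNReal.ofReal (|u x| ^ p.toReal * Hsigma x ^ (-δ * p.toReal - hQ n))) ^ (1 / p.toReal)

/-- Weighted Lebesgue norm `‖u‖'_{p,δ}` (with weight `ρ`). -/
def wnorm' {n : ℕ} (p : ℝ≥0∞) (δ : ℝ) (u : H n → ℝ) : ℝ≥0∞ :=
  if p = ∞ then essSup (fun x => ENNReal.ofReal (Hrho x ^ (-δ) * |u x|)) volume
  else (∫⁻ x : H n,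
      ENNReal.ofReal (|u x| ^ p.toReal * Hrho x ^ (-δ * p.toReal - hQ n))) ^ (1 / p.toReal)

/-- The horizontal vector field `e_a` at the point `x`, as a tangent vector:
`e_j = ∂_{x_j} + 2 y_j ∂_t`, `e_{n+j} = ∂_{y_j} - 2 x_j ∂_t`. -/
def hvf {n : ℕ} (a : Fin n ⊕ Fin n) (x : H n) : H n :=
  match a with
  | .inl j => (Pi.single j 1, 2 * (x.1 j).im)
  | .inr j => (Pi.single j Complex.I, -(2 * (x.1 j).re))

/-- Derivative of `u` along the horizontal vector field `e_a`. -/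
def hderiv {n : ℕ} (a : Fin n ⊕ Fin n) (u : H n → ℝ) (x : H n) : ℝ :=
  fderiv ℝ u x (hvf a x)

/-- Iterated horizontal derivative `e_{a_1} ⋯ e_{a_j} u`. -/
def hderivList {n : ℕ} : List (Fin n ⊕ Fin n) → (H n → ℝ) → H n → ℝ
  | [], u => u
  | a :: l, u => hderiv a (hderivList l u)

/-- Length of the `j`-th horizontal gradient `|∇ʲu|`. -/
def gradLen {n : ℕ} (j : ℕ) (u : H n → ℝ) (x : H n) : ℝ :=
  Real.sqrt (∑ w : Fin j → (Fin n ⊕ Fin n), (hderivList (List.ofFn w) u x) ^ 2)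

/-- Weighted Folland–Stein norm `‖u‖_{k,p,δ}`. -/
def FSnorm {n : ℕ} (k : ℕ) (p : ℝ≥0∞) (δ : ℝ) (u : H n → ℝ) : ℝ≥0∞ :=
  ∑ j ∈ Finset.range (k + 1), wnorm p (δ - j) (gradLen j u)

/-- Weighted Folland–Stein norm `‖u‖'_{k,p,δ}`. -/
def FSnorm' {n : ℕ} (k : ℕ) (p : ℝ≥0∞) (δ : ℝ) (u : H n → ℝ) : ℝ≥0∞ :=
  ∑ j ∈ Finset.range (k + 1), wnorm' p (δ - j) (gradLen j u)

/-- The sub-Laplacian `Δ_b u = Σ_a e_a (e_a u)`. -/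
def subLap {n : ℕ} (u : H n → ℝ) (x : H n) : ℝ :=
  ∑ a : Fin n ⊕ Fin n, hderiv a (hderiv a u) x

/-- Heisenberg dilation `δ_R(z,t) = (Rz, R²t)`. -/
def Hdil {n : ℕ} (R : ℝ) (x : H n) : H n := (R • x.1, R ^ 2 * x.2)

def Kker {n : ℕ} (a b : ℝ) (x y : H n) : ℝ :=
  Hrho x ^ (-a) * Hrho (Hmul (Hinv y) x) ^ (-hQ n + a + b) * Hrho y ^ (-b)

namespace Stmt13Aux

/-- squared z-norm -/
def zsq {n : ℕ} (x : H n) : ℝ := ∑ j, ‖x.1 j‖ ^ 2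

lemma zsq_nonneg {n : ℕ} (x : H n) : 0 ≤ zsq x := by
  unfold zsq; positivity

lemma Hrho_eq {n : ℕ} (x : H n) : Hrho x = (zsq x ^ 2 + x.2 ^ 2) ^ ((1:ℝ)/4) := rfl

lemma Hrho_nonneg {n : ℕ} (x : H n) : 0 ≤ Hrho x :=
  Real.rpow_nonneg (by positivity) _

lemma Hrho_pow_four {n : ℕ} (x : H n) : Hrho x ^ (4:ℕ) = zsq x ^ 2 + x.2 ^ 2 := by
  have h : (0:ℝ) ≤ zsq x ^ 2 + x.2 ^ 2 := by positivity
  rw [Hrho_eq, ← Real.rpow_natCast ((zsq x ^ 2 + x.2 ^ 2) ^ ((1:ℝ)/4)) 4,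
    ← Real.rpow_mul h]
  norm_num

lemma zsq_le {n : ℕ} (x : H n) : zsq x ≤ Hrho x ^ 2 := by
  have h4 := Hrho_pow_four x
  have h1 : zsq x ^ 2 ≤ (Hrho x ^ 2) ^ 2 := by nlinarith [sq_nonneg x.2]
  exact (pow_le_pow_iff_left₀ (zsq_nonneg x) (by positivity) (by norm_num)).mp h1

lemma abs_snd_le {n : ℕ} (x : H n) : |x.2| ≤ Hrho x ^ 2 := by
  have h4 := Hrho_pow_four x
  have h1 : |x.2| ^ 2 ≤ (Hrho x ^ 2) ^ 2 := by
    rw [sq_abs]; nlinarith [sq_nonneg (zsq x)]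
  exact (pow_le_pow_iff_left₀ (abs_nonneg x.2) (by positivity) (by norm_num)).mp h1

lemma abs_coord_le {n : ℕ} (x : H n) (j : Fin n) : ‖x.1 j‖ ≤ Hrho x := by
  have h1 : ‖x.1 j‖ ^ 2 ≤ zsq x := by
    unfold zsq
    exact Finset.single_le_sum (f := fun j => ‖x.1 j‖ ^ 2)
      (fun i _ => by positivity) (Finset.mem_univ j)
  have h2 : ‖x.1 j‖ ^ 2 ≤ Hrho x ^ 2 := h1.trans (zsq_le x)
  exact (pow_le_pow_iff_left₀ (by positivity) (Hrho_nonneg x) (by norm_num)).mp h2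

end Stmt13Aux
namespace Stmt13Aux

lemma sum_abs_mul_le {n : ℕ} (u v : H n) :
    ∑ j, ‖u.1 j‖ * ‖v.1 j‖ ≤
      Real.sqrt (zsq u) * Real.sqrt (zsq v) := by
  have h2 : (∑ j, ‖u.1 j‖ * ‖v.1 j‖) ^ 2 ≤ zsq u * zsq v :=
    Finset.sum_mul_sq_le_sq_mul_sq _ _ _
  have h3 : (0:ℝ) ≤ ∑ j, ‖u.1 j‖ * ‖v.1 j‖ := by positivity
  calc ∑ j, ‖u.1 j‖ * ‖v.1 j‖
      = Real.sqrt ((∑ j, ‖u.1 j‖ * ‖v.1 j‖) ^ 2) :=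
        (Real.sqrt_sq h3).symm
    _ ≤ Real.sqrt (zsq u * zsq v) := Real.sqrt_le_sqrt h2
    _ = Real.sqrt (zsq u) * Real.sqrt (zsq v) := Real.sqrt_mul (zsq_nonneg u) _

lemma cs_bound {n : ℕ} (u v : H n) :
    ‖∑ j, u.1 j * (starRingEnd ℂ) (v.1 j)‖ ≤
      Real.sqrt (zsq u) * Real.sqrt (zsq v) := by
  have h1 : ‖∑ j, u.1 j * (starRingEnd ℂ) (v.1 j)‖ ≤
      ∑ j, ‖u.1 j‖ * ‖v.1 j‖ := by
    refine (norm_sum_le _ _).trans ?_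
    apply Finset.sum_le_sum
    intro i _
    rw [norm_mul]
    simp
  exact h1.trans (sum_abs_mul_le u v)

lemma sqrt_zsq_le {n : ℕ} (x : H n) : Real.sqrt (zsq x) ≤ Hrho x := by
  calc Real.sqrt (zsq x) ≤ Real.sqrt (Hrho x ^ 2) := Real.sqrt_le_sqrt (zsq_le x)
    _ = Hrho x := Real.sqrt_sq (Hrho_nonneg x)

lemma Hrho_triangle {n : ℕ} (u v : H n) :
    Hrho (Hmul u v) ≤ 2 * (Hrho u + Hrho v) := by
  set p := Real.sqrt (zsq u) with hp
  set q := Real.sqrt (zsq v) with hq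
  have hp0 : 0 ≤ p := Real.sqrt_nonneg _
  have hq0 : 0 ≤ q := Real.sqrt_nonneg _
  have hpr : p ≤ Hrho u := sqrt_zsq_le u
  have hqr : q ≤ Hrho v := sqrt_zsq_le v
  have hru : 0 ≤ Hrho u := Hrho_nonneg u
  have hrv : 0 ≤ Hrho v := Hrho_nonneg v
  have hp2 : p ^ 2 = zsq u := Real.sq_sqrt (zsq_nonneg u)
  have hq2 : q ^ 2 = zsq v := Real.sq_sqrt (zsq_nonneg v)
  -- z-part bound
  have hz : zsq (Hmul u v) ≤ (p + q) ^ 2 := by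
    have h1 : ∀ j : Fin n, ‖(Hmul u v).1 j‖ ^ 2 ≤
        (‖u.1 j‖ + ‖v.1 j‖) ^ 2 := by
      intro j
      have : ‖(Hmul u v).1 j‖ ≤ ‖u.1 j‖ + ‖v.1 j‖ := by
        show ‖u.1 j + v.1 j‖ ≤ _
        exact norm_add_le _ _
      exact pow_le_pow_left₀ (by positivity) this 2
    have h2 : zsq (Hmul u v) ≤ ∑ j, (‖u.1 j‖ + ‖v.1 j‖) ^ 2 :=
      Finset.sum_le_sum fun j _ => h1 j
    refine h2.trans ?_
    have h3 : ∑ j, (‖u.1 j‖ + ‖v.1 j‖) ^ 2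
        = zsq u + 2 * ∑ j, ‖u.1 j‖ * ‖v.1 j‖ + zsq v := by
      simp only [add_sq]
      rw [Finset.sum_add_distrib, Finset.sum_add_distrib, Finset.mul_sum]
      unfold zsq
      ring_nf
    rw [h3]
    have h4 := sum_abs_mul_le u v
    nlinarith
  -- t-part bound
  have ht : |(Hmul u v).2| ≤ (Hrho u + Hrho v) ^ 2 := by
    show |u.2 + v.2 + 2 * (∑ j, u.1 j * (starRingEnd ℂ) (v.1 j)).im| ≤ _
    have him : |(∑ j, u.1 j * (starRingEnd ℂ) (v.1 j)).im| ≤ p * q :=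
      (Complex.abs_im_le_norm _).trans (cs_bound u v)
    have h1 := abs_snd_le u
    have h2 := abs_snd_le v
    have hpq : p * q ≤ Hrho u * Hrho v := mul_le_mul hpr hqr hq0 hru
    calc |u.2 + v.2 + 2 * (∑ j, u.1 j * (starRingEnd ℂ) (v.1 j)).im|
        ≤ |u.2| + |v.2| + 2 * |(∑ j, u.1 j * (starRingEnd ℂ) (v.1 j)).im| := by
          refine (abs_add_le _ _).trans ?_
          have h3 : |2 * (∑ j, u.1 j * (starRingEnd ℂ) (v.1 j)).im| =
            2 * |(∑ j, u.1 j * (starRingEnd ℂ) (v.1 j)).im| := by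
            rw [abs_mul]; norm_num
          have := abs_add_le u.2 v.2
          linarith
      _ ≤ Hrho u ^ 2 + Hrho v ^ 2 + 2 * (Hrho u * Hrho v) := by
          have := him.trans hpq
          linarith
      _ = (Hrho u + Hrho v) ^ 2 := by ring
  -- combine
  have hpq2 : p + q ≤ Hrho u + Hrho v := add_le_add hpr hqr
  have key : Hrho (Hmul u v) ^ (4:ℕ) ≤ (2 * (Hrho u + Hrho v)) ^ (4:ℕ) := by
    rw [Hrho_pow_four]
    have h5 : zsq (Hmul u v) ≤ (Hrho u + Hrho v) ^ 2 :=
      hz.trans (pow_le_pow_left₀ (add_nonneg hp0 hq0) hpq2 2)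
    have e1 : zsq (Hmul u v) ^ 2 ≤ ((Hrho u + Hrho v) ^ 2) ^ 2 :=
      pow_le_pow_left₀ (zsq_nonneg _) h5 2
    have e2 : (Hmul u v).2 ^ 2 ≤ ((Hrho u + Hrho v) ^ 2) ^ 2 := by
      rw [← sq_abs]
      exact pow_le_pow_left₀ (abs_nonneg _) ht 2
    have hs : (0:ℝ) ≤ Hrho u + Hrho v := add_nonneg hru hrv
    nlinarith [e1, e2, hs]
  exact (pow_le_pow_iff_left₀ (Hrho_nonneg _) (by positivity) (by norm_num)).mp key

end Stmt13Aux
namespace Stmt13Aux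

lemma Hrho_inv {n : ℕ} (y : H n) : Hrho (Hinv y) = Hrho y := by
  unfold Hrho Hinv
  simp

lemma Hmul_inv_cancel {n : ℕ} (y x : H n) : Hmul y (Hmul (Hinv y) x) = x := by
  unfold Hmul Hinv
  refine Prod.ext ?_ ?_
  · simp
  · show y.2 + (-y.2 + x.2 + 2 * (∑ j, -y.1 j * (starRingEnd ℂ) (x.1 j)).im)
        + 2 * (∑ j, y.1 j * (starRingEnd ℂ) (-y.1 j + x.1 j)).im = x.2
    have key : (∑ j, -y.1 j * (starRingEnd ℂ) (x.1 j)).im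
        + (∑ j, y.1 j * (starRingEnd ℂ) (-y.1 j + x.1 j)).im = 0 := by
      rw [← Complex.add_im, ← Finset.sum_add_distrib]
      have : ∀ j : Fin n, -y.1 j * (starRingEnd ℂ) (x.1 j)
          + y.1 j * (starRingEnd ℂ) (-y.1 j + x.1 j) = -(y.1 j * (starRingEnd ℂ) (y.1 j)) := by
        intro j
        rw [map_add, map_neg]
        ring
      rw [Finset.sum_congr rfl fun j _ => this j]
      rw [Complex.im_sum]
      apply Finset.sum_eq_zero
      intro j _
      rw [Complex.neg_im, Complex.mul_conj]
      simp
    linarith [key]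

lemma Hrho_zero_iff {n : ℕ} (y : H n) : Hrho y = 0 ↔ y = 0 := by
  constructor
  · intro h
    have h4 : zsq y ^ 2 + y.2 ^ 2 = 0 := by
      rw [← Hrho_pow_four, h]; norm_num
    have hz : zsq y = 0 := by nlinarith [zsq_nonneg y, sq_nonneg y.2]
    have ht : y.2 = 0 := by nlinarith [zsq_nonneg y]
    have hz1 : y.1 = 0 := by
      funext j
      have h1 : ‖y.1 j‖ ^ 2 ≤ 0 := hz ▸ Finset.single_le_sum
        (f := fun j => ‖y.1 j‖ ^ 2) (fun i _ => by positivity) (Finset.mem_univ j)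
      have : ‖y.1 j‖ = 0 := by nlinarith [norm_nonneg (y.1 j)]
      simpa using this
    exact Prod.ext hz1 ht
  · rintro rfl
    unfold Hrho
    norm_num

lemma continuous_Hrho {n : ℕ} : Continuous (Hrho (n := n)) := by
  apply Continuous.rpow_const
  · apply Continuous.add
    · apply Continuous.pow
      apply continuous_finset_sum
      intro j _
      exact (continuous_norm.comp ((continuous_apply j).comp continuous_fst)).pow 2
    · exact continuous_snd.pow 2
  · intro x
    right; norm_num

lemma measurable_Hrho {n : ℕ} : Measurable (Hrho (n := n)) :=
  continuous_Hrho.measurable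

/-- comparison of rpow for comparable bases -/
lemma rpow_upper {u v e : ℝ} (hu : 0 < u) (hv : 0 < v) (h1 : v / 4 ≤ u) (h2 : u ≤ 4 * v) :
    u ^ e ≤ (4:ℝ) ^ |e| * v ^ e := by
  rcases le_or_gt 0 e with he | he
  · rw [abs_of_nonneg he]
    calc u ^ e ≤ (4 * v) ^ e := Real.rpow_le_rpow hu.le h2 he
      _ = 4 ^ e * v ^ e := Real.mul_rpow (by norm_num) hv.le
  · rw [abs_of_neg he]
    calc u ^ e ≤ (v / 4) ^ e := Real.rpow_le_rpow_of_nonpos (by linarith) h1 he.le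
      _ = 4 ^ (-e) * v ^ e := by
          rw [div_eq_mul_inv, Real.mul_rpow hv.le (by norm_num),
            Real.inv_rpow (by norm_num), ← Real.rpow_neg (by norm_num)]
          ring

lemma rpow_lower {u v e : ℝ} (hu : 0 < u) (hv : 0 < v) (h1 : v / 4 ≤ u) (h2 : u ≤ 4 * v) :
    ((4:ℝ) ^ |e|)⁻¹ * v ^ e ≤ u ^ e := by
  have h4 : (0:ℝ) < 4 ^ |e| := Real.rpow_pos_of_pos (by norm_num) _
  rw [inv_mul_le_iff₀ h4]
  exact rpow_upper hv hu (by linarith) (by linarith)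

end Stmt13Aux
namespace Stmt13Aux

lemma Hrho_w_bounds {n : ℕ} {x y : H n} (hy : Hrho y ≤ 1) (hx : 4 ≤ Hrho x) :
    Hrho x / 4 ≤ Hrho (Hmul (Hinv y) x) ∧ Hrho (Hmul (Hinv y) x) ≤ 4 * Hrho x := by
  have hy0 : 0 ≤ Hrho y := Hrho_nonneg y
  have hupper : Hrho (Hmul (Hinv y) x) ≤ 2 * (Hrho y + Hrho x) := by
    have h := Hrho_triangle (Hinv y) x
    rwa [Hrho_inv] at h
  have hlow : Hrho x ≤ 2 * (Hrho y + Hrho (Hmul (Hinv y) x)) := by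
    have h := Hrho_triangle y (Hmul (Hinv y) x)
    rwa [Hmul_inv_cancel] at h
  constructor
  · linarith
  · linarith

lemma Kker_upper {n : ℕ} (a b : ℝ) {x y : H n} (hy : Hrho y ≤ 1) (hx : 4 ≤ Hrho x) :
    Kker a b x y ≤
      ((4:ℝ) ^ |(-hQ n + a + b)| * Hrho x ^ (b - hQ n)) * Hrho y ^ (-b) := by
  set e := -hQ n + a + b with he
  have hx0 : (0:ℝ) < Hrho x := by linarith
  obtain ⟨hw1, hw2⟩ := Hrho_w_bounds hy hx
  have hw0 : (0:ℝ) < Hrho (Hmul (Hinv y) x) := by linarith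
  have h1 : Hrho (Hmul (Hinv y) x) ^ e ≤ (4:ℝ) ^ |e| * Hrho x ^ e :=
    rpow_upper hw0 hx0 hw1 hw2
  have h2 : Hrho x ^ (-a) * Hrho (Hmul (Hinv y) x) ^ e ≤
      (4:ℝ) ^ |e| * Hrho x ^ (b - hQ n) := by
    calc Hrho x ^ (-a) * Hrho (Hmul (Hinv y) x) ^ e
        ≤ Hrho x ^ (-a) * ((4:ℝ) ^ |e| * Hrho x ^ e) :=
          mul_le_mul_of_nonneg_left h1 (Real.rpow_nonneg hx0.le _)
      _ = (4:ℝ) ^ |e| * (Hrho x ^ (-a) * Hrho x ^ e) := by ring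
      _ = (4:ℝ) ^ |e| * Hrho x ^ (b - hQ n) := by
          rw [← Real.rpow_add hx0]
          congr 1
          rw [he]; ring
  calc Kker a b x y = (Hrho x ^ (-a) * Hrho (Hmul (Hinv y) x) ^ e) * Hrho y ^ (-b) := rfl
    _ ≤ ((4:ℝ) ^ |e| * Hrho x ^ (b - hQ n)) * Hrho y ^ (-b) :=
        mul_le_mul_of_nonneg_right h2 (Real.rpow_nonneg (Hrho_nonneg y) _)

lemma Kker_lower {n : ℕ} (a b : ℝ) (hb0 : 0 ≤ b) {x y : H n} (hy : Hrho y ≤ 1)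
    (hy0 : 0 < Hrho y) (hx : 4 ≤ Hrho x) :
    ((4:ℝ) ^ |(-hQ n + a + b)|)⁻¹ * Hrho x ^ (b - hQ n) ≤ Kker a b x y := by
  set e := -hQ n + a + b with he
  have hx0 : (0:ℝ) < Hrho x := by linarith
  obtain ⟨hw1, hw2⟩ := Hrho_w_bounds hy hx
  have hw0 : (0:ℝ) < Hrho (Hmul (Hinv y) x) := by linarith
  have h1 : ((4:ℝ) ^ |e|)⁻¹ * Hrho x ^ e ≤ Hrho (Hmul (Hinv y) x) ^ e :=
    rpow_lower hw0 hx0 hw1 hw2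
  have hyb : (1:ℝ) ≤ Hrho y ^ (-b) :=
    Real.one_le_rpow_of_pos_of_le_one_of_nonpos hy0 hy (neg_nonpos.mpr hb0)
  have h2 : ((4:ℝ) ^ |e|)⁻¹ * Hrho x ^ (b - hQ n) ≤
      Hrho x ^ (-a) * Hrho (Hmul (Hinv y) x) ^ e := by
    calc ((4:ℝ) ^ |e|)⁻¹ * Hrho x ^ (b - hQ n)
        = Hrho x ^ (-a) * (((4:ℝ) ^ |e|)⁻¹ * Hrho x ^ e) := by
          rw [mul_comm (Hrho x ^ (-a)), mul_assoc, ← Real.rpow_add hx0]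
          congr 2
          rw [he]; ring
      _ ≤ Hrho x ^ (-a) * Hrho (Hmul (Hinv y) x) ^ e :=
          mul_le_mul_of_nonneg_left h1 (Real.rpow_nonneg hx0.le _)
  calc ((4:ℝ) ^ |e|)⁻¹ * Hrho x ^ (b - hQ n)
      ≤ Hrho x ^ (-a) * Hrho (Hmul (Hinv y) x) ^ e := h2
    _ ≤ (Hrho x ^ (-a) * Hrho (Hmul (Hinv y) x) ^ e) * Hrho y ^ (-b) :=
        le_mul_of_one_le_right (by positivity) hyb
    _ = Kker a b x y := rfl

end Stmt13Aux
namespace Stmt13Aux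

/-- 1-D profile -/
def psi (α : ℝ) : ℝ → ℝ := (Set.Icc (-1:ℝ) 1).indicator fun t => |t| ^ (-α)

lemma measurable_psi (α : ℝ) : Measurable (psi α) := by
  unfold psi
  apply Measurable.indicator _ measurableSet_Icc
  fun_prop

lemma psi_nonneg (α : ℝ) (t : ℝ) : 0 ≤ psi α t := by
  unfold psi
  apply Set.indicator_nonneg
  intro t _
  positivity

lemma integrable_psi {α : ℝ} (hα : α < 1) : Integrable (psi α) := by
  unfold psi
  rw [integrable_indicator_iff measurableSet_Icc]
  have h01 : IntegrableOn (fun t : ℝ => |t| ^ (-α)) (Set.Icc 0 1) volume := by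
    have h1 : IntegrableOn (fun t : ℝ => t ^ (-α)) (Set.Icc 0 1) volume := by
      have h := intervalIntegral.intervalIntegrable_rpow' (a := (0:ℝ)) (b := 1)
        (r := -α) (by linarith)
      rwa [intervalIntegrable_iff_integrableOn_Icc_of_le (by norm_num)] at h
    exact h1.congr_fun (fun t ht => by rw [abs_of_nonneg ht.1]) measurableSet_Icc
  have hneg : IntegrableOn (fun t : ℝ => |t| ^ (-α)) (Set.Icc (-1) 0) volume := by
    have h2 := (MeasurePreserving.integrableOn_comp_preimage
      (Measure.measurePreserving_neg (volume : Measure ℝ))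
      (MeasurableEquiv.neg ℝ).measurableEmbedding
      (f := fun t : ℝ => |t| ^ (-α)) (s := Set.Icc (0:ℝ) 1)).mpr h01
    have hset : (Neg.neg : ℝ → ℝ) ⁻¹' Set.Icc (0:ℝ) 1 = Set.Icc (-1) 0 := by
      ext t
      simp only [Set.mem_preimage, Set.mem_Icc]
      constructor <;> intro ⟨h1, h2⟩ <;> constructor <;> linarith
    have hfun : ((fun t : ℝ => |t| ^ (-α)) ∘ (Neg.neg : ℝ → ℝ))
        = fun t : ℝ => |t| ^ (-α) := by
      funext t; simp [Function.comp, abs_neg]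
    rwa [hset, hfun] at h2
  have : IntegrableOn (fun t : ℝ => |t| ^ (-α)) (Set.Icc (-1) 0 ∪ Set.Icc 0 1) volume :=
    hneg.union h01
  apply this.mono_set
  intro t ht
  rcases le_or_gt t 0 with h | h
  · exact Or.inl ⟨ht.1, h⟩
  · exact Or.inr ⟨h.le, ht.2⟩

/-- 2-D (complex) profile -/
def phi (α : ℝ) : ℂ → ℝ := fun w => psi α w.re * psi α w.im

lemma integrable_phi {α : ℝ} (hα : α < 1) : Integrable (phi α) := by
  have hprod : Integrable (fun p : ℝ × ℝ => psi α p.1 * psi α p.2) volume := by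
    rw [MeasureTheory.Measure.volume_eq_prod]
    exact (integrable_psi hα).mul_prod (integrable_psi hα)
  exact (Complex.volume_preserving_equiv_real_prod.integrable_comp_emb
    Complex.measurableEquivRealProd.measurableEmbedding).mpr hprod

/-- dominating function on `H n` -/
def bigF (n : ℕ) (α : ℝ) : H n → ℝ := fun y => (∏ j, phi α (y.1 j)) * psi α y.2

lemma integrable_bigF (n : ℕ) {α : ℝ} (hα : α < 1) : Integrable (bigF n α) := by
  have hF : Integrable (fun z : Fin n → ℂ => ∏ j, phi α (z j)) volume :=
    Integrable.fintype_prod (𝕜 := ℝ) (fun _ => integrable_phi hα)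
  unfold bigF
  rw [MeasureTheory.Measure.volume_eq_prod]
  exact hF.mul_prod (integrable_psi hα)

lemma lintegral_bigF_lt_top (n : ℕ) {α : ℝ} (hα : α < 1) :
    ∫⁻ y : H n, ENNReal.ofReal (bigF n α y) < ⊤ :=
  (integrable_bigF n hα).lintegral_lt_top

end Stmt13Aux
namespace Stmt13Aux

def badSet (n : ℕ) : Set (H n) :=
  {y | y.2 = 0} ∪ ⋃ j, ({y | (y.1 j).re = 0} ∪ {y | (y.1 j).im = 0})

lemma volume_line_re : (volume : Measure ℂ) {w : ℂ | w.re = 0} = 0 := by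
  have h : {w : ℂ | w.re = 0} =
      Complex.measurableEquivRealProd ⁻¹' (({0} : Set ℝ) ×ˢ (Set.univ : Set ℝ)) := by
    ext w
    simp [Complex.measurableEquivRealProd_apply, eq_comm]
  rw [h, Complex.volume_preserving_equiv_real_prod.measure_preimage
    ((MeasurableSet.singleton 0).prod MeasurableSet.univ).nullMeasurableSet,
    MeasureTheory.Measure.volume_eq_prod, Measure.prod_prod]
  simp

lemma volume_line_im : (volume : Measure ℂ) {w : ℂ | w.im = 0} = 0 := by
  have h : {w : ℂ | w.im = 0} =
      Complex.measurableEquivRealProd ⁻¹' ((Set.univ : Set ℝ) ×ˢ ({0} : Set ℝ)) := by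
    ext w
    simp [Complex.measurableEquivRealProd_apply, eq_comm]
  rw [h, Complex.volume_preserving_equiv_real_prod.measure_preimage
    (MeasurableSet.univ.prod (MeasurableSet.singleton 0)).nullMeasurableSet,
    MeasureTheory.Measure.volume_eq_prod, Measure.prod_prod]
  simp

lemma volume_coord_null {n : ℕ} (j : Fin n) (A : Set ℂ) (hA : volume A = 0) :
    (volume : Measure (H n)) {y : H n | y.1 j ∈ A} = 0 := by
  have h : {y : H n | y.1 j ∈ A} = {z : Fin n → ℂ | z j ∈ A} ×ˢ (Set.univ : Set ℝ) := by
    ext y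
    simp [Set.mem_prod]
  rw [h, MeasureTheory.Measure.volume_eq_prod, Measure.prod_prod]
  have hz : (volume : Measure (Fin n → ℂ)) {z : Fin n → ℂ | z j ∈ A} = 0 := by
    rw [MeasureTheory.volume_pi]
    exact Measure.pi_eval_preimage_null (μ := fun _ : Fin n => (volume : Measure ℂ)) (i := j) hA
  rw [hz, zero_mul]

lemma badSet_null (n : ℕ) : (volume : Measure (H n)) (badSet n) = 0 := by
  unfold badSet
  apply measure_union_null
  · have h : {y : H n | y.2 = 0} = (Set.univ : Set (Fin n → ℂ)) ×ˢ ({0} : Set ℝ) := by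
      ext y
      rw [Set.mem_setOf_eq, Set.mem_prod]
      simp only [Set.mem_univ, Set.mem_singleton_iff, true_and]
    rw [h, MeasureTheory.Measure.volume_eq_prod, Measure.prod_prod]
    simp
  · apply measure_iUnion_null
    intro j
    apply measure_union_null
    · exact volume_coord_null j {w : ℂ | w.re = 0} volume_line_re
    · exact volume_coord_null j {w : ℂ | w.im = 0} volume_line_im

lemma rho_rpow_le_bigF {n : ℕ} {b : ℝ} (hb0 : 0 ≤ b) (hbQ : b < 2*n+2) {y : H n}
    (hy : Hrho y ≤ 1) (hbad : y ∉ badSet n) :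
    Hrho y ^ (-b) ≤ bigF n (b / (2*n+2)) y := by
  set α := b / (2*(n:ℝ)+2) with hα
  have hden : (0:ℝ) < 2*(n:ℝ)+2 := by positivity
  have hα0 : 0 ≤ α := div_nonneg hb0 hden.le
  have hα1 : α < 1 := (div_lt_one hden).mpr hbQ
  simp only [badSet, Set.mem_union, Set.mem_iUnion, Set.mem_setOf_eq, not_or,
    not_exists] at hbad
  obtain ⟨ht, hco⟩ := hbad
  have hre : ∀ j, (y.1 j).re ≠ 0 := fun j => (hco j).1
  have him : ∀ j, (y.1 j).im ≠ 0 := fun j => (hco j).2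
  have hρne : Hrho y ≠ 0 := by
    intro h
    exact ht (by rw [(Hrho_zero_iff y).mp h]; rfl)
  have hρ0 : 0 < Hrho y := lt_of_le_of_ne (Hrho_nonneg y) (Ne.symm hρne)
  set ρ := Hrho y with hρdef
  -- membership facts
  have hsq : ρ ^ 2 ≤ 1 := by nlinarith
  have hmem_t : y.2 ∈ Set.Icc (-1:ℝ) 1 := by
    rw [Set.mem_Icc, ← abs_le]
    exact (abs_snd_le y).trans hsq
  have hmem_re : ∀ j, (y.1 j).re ∈ Set.Icc (-1:ℝ) 1 := by
    intro j
    rw [Set.mem_Icc, ← abs_le]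
    exact (Complex.abs_re_le_norm _).trans ((abs_coord_le y j).trans hy)
  have hmem_im : ∀ j, (y.1 j).im ∈ Set.Icc (-1:ℝ) 1 := by
    intro j
    rw [Set.mem_Icc, ← abs_le]
    exact (Complex.abs_im_le_norm _).trans ((abs_coord_le y j).trans hy)
  -- values of the dominating function
  have hpsi_t : psi α y.2 = |y.2| ^ (-α) := Set.indicator_of_mem hmem_t _
  have hphi : ∀ j, phi α (y.1 j) = |(y.1 j).re| ^ (-α) * |(y.1 j).im| ^ (-α) := by
    intro j
    unfold phi psi
    rw [Set.indicator_of_mem (hmem_re j), Set.indicator_of_mem (hmem_im j)]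
  -- algebraic identity
  have e1 : ((ρ ^ (-α)) ^ 2) ^ n = ρ ^ (-(α * (2*n))) := by
    rw [← pow_mul, ← Real.rpow_natCast (ρ ^ (-α)) (2*n), ← Real.rpow_mul hρ0.le]
    congr 1
    push_cast
    ring
  have e2 : (ρ ^ 2) ^ (-α) = ρ ^ (-(2*α)) := by
    rw [← Real.rpow_natCast ρ 2, ← Real.rpow_mul hρ0.le]
    congr 1
    push_cast
    ring
  have e3 : ρ ^ (-b) = ((ρ ^ (-α)) ^ 2) ^ n * (ρ ^ 2) ^ (-α) := by
    rw [e1, e2, ← Real.rpow_add hρ0]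
    congr 1
    have hαb : α * (2*(n:ℝ)+2) = b := by
      rw [hα]
      field_simp
    nlinarith [hαb]
  -- factor bounds
  have anti : ∀ u v : ℝ, 0 < u → u ≤ v → v ^ (-α) ≤ u ^ (-α) := fun u v hu huv =>
    Real.rpow_le_rpow_of_nonpos hu huv (neg_nonpos.mpr hα0)
  have f1 : ∀ j : Fin n, (ρ ^ (-α)) ^ 2 ≤ phi α (y.1 j) := by
    intro j
    rw [hphi j, sq]
    have hre0 : 0 < |(y.1 j).re| := abs_pos.mpr (hre j)
    have him0 : 0 < |(y.1 j).im| := abs_pos.mpr (him j)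
    have g1 : ρ ^ (-α) ≤ |(y.1 j).re| ^ (-α) :=
      anti _ _ hre0 ((Complex.abs_re_le_norm _).trans (abs_coord_le y j))
    have g2 : ρ ^ (-α) ≤ |(y.1 j).im| ^ (-α) :=
      anti _ _ him0 ((Complex.abs_im_le_norm _).trans (abs_coord_le y j))
    exact mul_le_mul g1 g2 (Real.rpow_nonneg hρ0.le _) (Real.rpow_nonneg hre0.le _)
  have f2 : (ρ ^ 2) ^ (-α) ≤ psi α y.2 := by
    rw [hpsi_t]
    exact anti _ _ (abs_pos.mpr ht) (abs_snd_le y)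
  -- assemble
  rw [e3]
  unfold bigF
  have hprodeq : ((ρ ^ (-α)) ^ 2) ^ n = ∏ _j : Fin n, (ρ ^ (-α)) ^ 2 := by
    rw [Finset.prod_const, Finset.card_univ, Fintype.card_fin]
  have hprodle : ∏ _j : Fin n, (ρ ^ (-α)) ^ 2 ≤ ∏ j, phi α (y.1 j) :=
    Finset.prod_le_prod (fun j _ => by positivity) (fun j _ => f1 j)
  apply mul_le_mul (hprodeq ▸ hprodle) f2 (by positivity)
  exact Finset.prod_nonneg fun j _ => le_trans (by positivity) (f1 j)

lemma volume_S_pos (n : ℕ) : 0 < (volume : Measure (H n)) {y : H n | Hrho y ≤ 1} := by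
  have hopen : IsOpen {y : H n | Hrho y < 1} :=
    isOpen_lt continuous_Hrho continuous_const
  have hne : {y : H n | Hrho y < 1}.Nonempty := by
    refine ⟨0, ?_⟩
    have h0 : Hrho (0 : H n) = 0 := (Hrho_zero_iff 0).mpr rfl
    simp [Set.mem_setOf_eq, h0]
  calc (0:ℝ≥0∞) < volume {y : H n | Hrho y < 1} := hopen.measure_pos volume hne
    _ ≤ volume {y : H n | Hrho y ≤ 1} :=
        measure_mono (Set.setOf_subset_setOf.mpr fun y => le_of_lt)

end Stmt13Aux
open Stmt13Aux

theorem stmt13 (n : ℕ) (hn : 0 < n) (a b : ℝ) (hab : 0 < a + b)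
    (hb0 : 0 ≤ b) (hbQ : b < hQ n) :
    ∃ c₁ c₂ R₀ : ℝ, 0 < c₁ ∧ 0 < c₂ ∧ 1 ≤ R₀ ∧
      ∀ x : H n, R₀ ≤ Hrho x →
        ENNReal.ofReal (c₁ * Hrho x ^ (b - hQ n)) ≤
          (∫⁻ y in {y : H n | Hrho y ≤ 1}, ENNReal.ofReal (Kker a b x y)) ∧
        (∫⁻ y in {y : H n | Hrho y ≤ 1}, ENNReal.ofReal (Kker a b x y)) ≤
          ENNReal.ofReal (c₂ * Hrho x ^ (b - hQ n)) := by
  classical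
  have hbQ' : b < 2*(n:ℝ)+2 := by
    have : hQ n = 2*(n:ℝ)+2 := rfl
    linarith [hbQ, this ▸ hbQ]
  set S : Set (H n) := {y : H n | Hrho y ≤ 1} with hS
  set e : ℝ := -hQ n + a + b with he
  set M : ℝ := (4:ℝ) ^ |e| with hM
  have hM0 : 0 < M := Real.rpow_pos_of_pos (by norm_num) _
  set α : ℝ := b / (2*(n:ℝ)+2) with hα
  have hα1 : α < 1 := by
    rw [hα, div_lt_one (by positivity)]
    exact hbQ'
  set Jbig : ℝ≥0∞ := ∫⁻ y : H n, ENNReal.ofReal (bigF n α y) with hJ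
  have hJlt : Jbig < ⊤ := lintegral_bigF_lt_top n hα1
  set m : ℝ≥0∞ := min 1 (volume S) with hm
  have hm0 : 0 < m := lt_min one_pos (volume_S_pos n)
  have hmtop : m ≠ ⊤ := ((min_le_left 1 _).trans_lt ENNReal.one_lt_top).ne
  have hmr0 : 0 < m.toReal := ENNReal.toReal_pos hm0.ne' hmtop
  refine ⟨M⁻¹ * m.toReal, M * (Jbig.toReal + 1), 4,
    mul_pos (inv_pos.mpr hM0) hmr0,
    mul_pos hM0 (by positivity), by norm_num, ?_⟩
  intro x hx
  have hx0 : (0:ℝ) < Hrho x := by linarith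
  have hrx : (0:ℝ) ≤ Hrho x ^ (b - hQ n) := Real.rpow_nonneg hx0.le _
  -- measurability of the kernel in y
  have hcont : Continuous fun y : H n => Hmul (Hinv y) x := by
    unfold Hmul Hinv
    refine Continuous.prodMk ?_ ?_
    · exact continuous_fst.neg.add continuous_const
    · refine ((continuous_snd.neg.add continuous_const).add ?_)
      refine Continuous.mul continuous_const ?_
      refine Complex.continuous_im.comp ?_
      refine continuous_finset_sum _ fun j _ => ?_
      exact (((continuous_apply j).comp continuous_fst).neg).mul continuous_const
  have h1m : Measurable fun y : H n => Hrho (Hmul (Hinv y) x) :=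
    (continuous_Hrho.comp hcont).measurable
  have h2m := measurable_Hrho (n := n)
  have hKm : Measurable fun y : H n => Kker a b x y := by
    unfold Kker
    fun_prop
  constructor
  · -- lower bound
    have hnull : volume {y : H n | Hrho y = 0} = 0 := by
      refine measure_mono_null (fun y hy => ?_) (badSet_null n)
      have : y = 0 := (Hrho_zero_iff y).mp hy
      exact Or.inl (by rw [this]; rfl)
    have hae : ∀ᵐ y : H n ∂volume, y ∈ S →
        ENNReal.ofReal (M⁻¹ * Hrho x ^ (b - hQ n)) ≤ ENNReal.ofReal (Kker a b x y) := by
      filter_upwards [measure_eq_zero_iff_ae_notMem.mp hnull] with y hy hyS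
      have hy0 : 0 < Hrho y := lt_of_le_of_ne (Hrho_nonneg y) (Ne.symm hy)
      exact ENNReal.ofReal_le_ofReal (Kker_lower a b hb0 hyS hy0 hx)
    have heq : M⁻¹ * m.toReal * Hrho x ^ (b - hQ n)
        = (M⁻¹ * Hrho x ^ (b - hQ n)) * m.toReal := by ring
    calc ENNReal.ofReal (M⁻¹ * m.toReal * Hrho x ^ (b - hQ n))
        = ENNReal.ofReal (M⁻¹ * Hrho x ^ (b - hQ n)) * m := by
          rw [heq, ENNReal.ofReal_mul (mul_nonneg (inv_nonneg.mpr hM0.le) hrx),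
            ENNReal.ofReal_toReal hmtop]
      _ ≤ ENNReal.ofReal (M⁻¹ * Hrho x ^ (b - hQ n)) * volume S :=
          mul_le_mul_right (min_le_right _ _) _
      _ = ∫⁻ _y in S, ENNReal.ofReal (M⁻¹ * Hrho x ^ (b - hQ n)) ∂volume := by
          rw [setLIntegral_const]
      _ ≤ ∫⁻ y in S, ENNReal.ofReal (Kker a b x y) ∂volume :=
          setLIntegral_mono_ae
            ((ENNReal.measurable_ofReal.comp hKm).aemeasurable.restrict) hae
  · -- upper bound
    have hup : ∫⁻ y in S, ENNReal.ofReal (Kker a b x y) ∂volume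
        ≤ ∫⁻ y in S, ENNReal.ofReal (M * Hrho x ^ (b - hQ n)) *
            ENNReal.ofReal (Hrho y ^ (-b)) ∂volume := by
      refine setLIntegral_mono_ae ?_ (Filter.Eventually.of_forall fun y hyS => ?_)
      · exact ((ENNReal.measurable_ofReal.comp (by fun_prop : Measurable fun y : H n =>
          M * Hrho x ^ (b - hQ n) * (Hrho y ^ (-b)))).aemeasurable.restrict).congr
          (Filter.Eventually.of_forall fun y => by
            show ENNReal.ofReal (M * Hrho x ^ (b - hQ n) * Hrho y ^ (-b)) = _
            rw [ENNReal.ofReal_mul (mul_nonneg hM0.le hrx)])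
      · rw [← ENNReal.ofReal_mul (mul_nonneg hM0.le hrx)]
        exact ENNReal.ofReal_le_ofReal (Kker_upper a b hyS hx)
    rw [lintegral_const_mul' _ _ ENNReal.ofReal_ne_top] at hup
    have hJS : ∫⁻ y in S, ENNReal.ofReal (Hrho y ^ (-b)) ∂volume ≤ Jbig := by
      have hg : AEMeasurable (fun y : H n => ENNReal.ofReal (bigF n α y))
          (volume.restrict S) := by
        have : Measurable (bigF n α) := by
          unfold bigF phi
          have := measurable_psi α
          fun_prop
        exact (ENNReal.measurable_ofReal.comp this).aemeasurable
      have hae2 : ∀ᵐ y : H n ∂volume, y ∈ S →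
          ENNReal.ofReal (Hrho y ^ (-b)) ≤ ENNReal.ofReal (bigF n α y) := by
        filter_upwards [measure_eq_zero_iff_ae_notMem.mp (badSet_null n)] with y hy hyS
        exact ENNReal.ofReal_le_ofReal (rho_rpow_le_bigF hb0 hbQ' hyS hy)
      calc ∫⁻ y in S, ENNReal.ofReal (Hrho y ^ (-b)) ∂volume
          ≤ ∫⁻ y in S, ENNReal.ofReal (bigF n α y) ∂volume :=
            setLIntegral_mono_ae hg hae2
        _ ≤ Jbig := setLIntegral_le_lintegral _ _
    refine hup.trans ?_
    have hfin : Jbig ≤ ENNReal.ofReal (Jbig.toReal + 1) := by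
      conv_lhs => rw [← ENNReal.ofReal_toReal hJlt.ne]
      exact ENNReal.ofReal_le_ofReal (by linarith [ENNReal.toReal_nonneg (a := Jbig)])
    calc ENNReal.ofReal (M * Hrho x ^ (b - hQ n)) *
          ∫⁻ y in S, ENNReal.ofReal (Hrho y ^ (-b)) ∂volume
        ≤ ENNReal.ofReal (M * Hrho x ^ (b - hQ n)) * ENNReal.ofReal (Jbig.toReal + 1) :=
          mul_le_mul_right (hJS.trans hfin) _
      _ = ENNReal.ofReal (M * (Jbig.toReal + 1) * Hrho x ^ (b - hQ n)) := by
          rw [← ENNReal.ofReal_mul (mul_nonneg hM0.le hrx)]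
          ring_nf

end
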